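/- Let ({f_n}_n, {τ_n}_n) and ({g_n}_n, {ω_n}_n) be two Lipschitz p-SFs for a subset M of a Banach space X such that ({g_n}_n, {ω_n}_n) is orthogonal to ({f_n}_n, {τ_n}_n). Equip X ⊕ X with the norm ‖x ⊕ y‖ := (‖x‖^p + ‖y‖^p)^{1/p}, and for each n define (f_n ⊕ g_n)(x ⊕ y) := f_n(x) + g_n(y) on M ⊕ M := {x ⊕ y : x, y ∈ M} and τ_n ⊕ ω_n ∈ M ⊕ M. Then ({f_n ⊕ g_n}_n, {τ_n ⊕ ω_n}_n) is a Lipschitz p-SF for the subset M ⊕ M of the Banach space X ⊕ X. -/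

import Mathlib

open Filter
open scoped ENNReal NNReal

noncomputable section

/-- A Lipschitz p-approximate Schauder frame for a subset `M` of a Banach space `X`:
`f` is the sequence of Lipschitz "analysis" functions, `τ` the sequence of frame vectors
(elements of `M`), `θf` the analysis map, `θτ` the synthesis operator, `S` the frame map
(an invertible bi-Lipschitz map of `M` with inverse `Sinv`), together with the
reconstruction property. -/
structure LipPASF (𝕂 : Type*) [RCLike 𝕂] (X : Type*) [NormedAddCommGroup X]
    [NormedSpace 𝕂 X] (p : ℝ≥0∞) [Fact (1 ≤ p)] (M : Set X) where
  f : ℕ → M → 𝕂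
  τ : ℕ → M
  f_lip : ∀ n, ∃ K : ℝ≥0, LipschitzWith K (f n)
  θf : M → lp (fun _ : ℕ => 𝕂) p
  θf_apply : ∀ (x : M) (n : ℕ), θf x n = f n x
  θf_lip : ∃ K : ℝ≥0, LipschitzWith K θf
  θτ : lp (fun _ : ℕ => 𝕂) p →L[𝕂] X
  θτ_sum : ∀ a : lp (fun _ : ℕ => 𝕂) p,
    Tendsto (fun N => ∑ n ∈ Finset.range N, a n • ((τ n : X))) atTop (nhds (θτ a))
  S : M → M
  S_sum : ∀ x : M,
    Tendsto (fun N => ∑ n ∈ Finset.range N, f n x • ((τ n : X))) atTop (nhds ((S x : X)))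
  Sinv : M → M
  left_inv : ∀ x, Sinv (S x) = x
  right_inv : ∀ x, S (Sinv x) = x
  S_lip : ∃ K : ℝ≥0, LipschitzWith K S
  Sinv_lip : ∃ K : ℝ≥0, LipschitzWith K Sinv
  recon : ∀ x : M,
    Tendsto (fun N => ∑ n ∈ Finset.range N, f n x • ((Sinv (τ n) : X))) atTop (nhds ((x : X)))

/-- If `(f, τ)` and `(g, ω)` are two orthogonal Lipschitz p-SFs for `M ⊆ X`,
then `({fₙ ⊕ gₙ}, {τₙ ⊕ ωₙ})` is a Lipschitz p-SF for `M ⊕ M ⊆ X ⊕ X`, where `X ⊕ X` carries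
the norm `‖x ⊕ y‖ = (‖x‖^p + ‖y‖^p)^{1/p}` and `(fₙ ⊕ gₙ)(x ⊕ y) = fₙ(x) + gₙ(y)`. -/
theorem stmt19 {𝕂 X : Type*} [RCLike 𝕂] [NormedAddCommGroup X] [NormedSpace 𝕂 X]
    [CompleteSpace X] (p : ℝ≥0∞) [Fact (1 ≤ p)] (hp : p ≠ ∞) (M : Set X)
    (F G : LipPASF 𝕂 X p M) (hFS : F.S = id) (hGS : G.S = id)
    (horth₁ : ∀ x : M, Tendsto (fun N => ∑ n ∈ Finset.range N, G.f n x • ((F.τ n : X)))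
      atTop (nhds (0 : X)))
    (horth₂ : ∀ x : M, Tendsto (fun N => ∑ n ∈ Finset.range N, F.f n x • ((G.τ n : X)))
      atTop (nhds (0 : X))) :
    ∃ H : LipPASF 𝕂 (WithLp p (X × X)) p
        {z : WithLp p (X × X) |
          (WithLp.equiv p (X × X) z).1 ∈ M ∧ (WithLp.equiv p (X × X) z).2 ∈ M},
      (∀ n (z : {z : WithLp p (X × X) |
          (WithLp.equiv p (X × X) z).1 ∈ M ∧ (WithLp.equiv p (X × X) z).2 ∈ M}),
        H.f n z = F.f n ⟨(WithLp.equiv p (X × X) (z : WithLp p (X × X))).1, z.2.1⟩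
          + G.f n ⟨(WithLp.equiv p (X × X) (z : WithLp p (X × X))).2, z.2.2⟩) ∧
      (∀ n, WithLp.equiv p (X × X) ((H.τ n : WithLp p (X × X)))
          = ((F.τ n : X), (G.τ n : X))) ∧
      H.S = id := by
  classical
  set M' : Set (WithLp p (X × X)) :=
    {z : WithLp p (X × X) |
      (WithLp.equiv p (X × X) z).1 ∈ M ∧ (WithLp.equiv p (X × X) z).2 ∈ M} with hM'
  set e : WithLp p (X × X) ≃L[𝕂] X × X := WithLp.prodContinuousLinearEquiv p 𝕂 X X with he
  -- projections
  set π₁ : M' → M := fun z => ⟨(WithLp.equiv p (X × X) z.1).1, z.2.1⟩ with hπ₁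
  set π₂ : M' → M := fun z => ⟨(WithLp.equiv p (X × X) z.1).2, z.2.2⟩ with hπ₂
  have lipπ₁ : LipschitzWith 1 π₁ := by
    intro z w
    have h1 : edist (π₁ z) (π₁ w)
        = edist (WithLp.equiv p (X × X) z.1).1 (WithLp.equiv p (X × X) w.1).1 := rfl
    rw [h1]
    calc edist (WithLp.equiv p (X × X) z.1).1 (WithLp.equiv p (X × X) w.1).1
        ≤ edist (WithLp.equiv p (X × X) z.1) (WithLp.equiv p (X × X) w.1) := by
          rw [Prod.edist_eq]; exact le_max_left _ _
      _ ≤ 1 * edist z.1 w.1 := WithLp.prod_lipschitzWith_ofLp p X X z.1 w.1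
      _ = 1 * edist z w := rfl
  have lipπ₂ : LipschitzWith 1 π₂ := by
    intro z w
    have h1 : edist (π₂ z) (π₂ w)
        = edist (WithLp.equiv p (X × X) z.1).2 (WithLp.equiv p (X × X) w.1).2 := rfl
    rw [h1]
    calc edist (WithLp.equiv p (X × X) z.1).2 (WithLp.equiv p (X × X) w.1).2
        ≤ edist (WithLp.equiv p (X × X) z.1) (WithLp.equiv p (X × X) w.1) := by
          rw [Prod.edist_eq]; exact le_max_right _ _
      _ ≤ 1 * edist z.1 w.1 := WithLp.prod_lipschitzWith_ofLp p X X z.1 w.1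
      _ = 1 * edist z w := rfl
  -- frame vectors
  set tp : ℕ → M' := fun n =>
    ⟨(WithLp.equiv p (X × X)).symm ((F.τ n : X), (G.τ n : X)), by
      constructor <;> simp [(F.τ n).2, (G.τ n).2]⟩ with htp
  have etp : ∀ n, e ((tp n : WithLp p (X × X))) = ((F.τ n : X), (G.τ n : X)) := by
    intro n
    show WithLp.equiv p (X × X) ((WithLp.equiv p (X × X)).symm _) = _
    simp [htp]
  -- key convergence lemma
  have key : ∀ (c : ℕ → 𝕂) (x y : X),
      Tendsto (fun N => ∑ n ∈ Finset.range N, c n • ((F.τ n : X))) atTop (nhds x) →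
      Tendsto (fun N => ∑ n ∈ Finset.range N, c n • ((G.τ n : X))) atTop (nhds y) →
      Tendsto (fun N => ∑ n ∈ Finset.range N, c n • ((tp n : WithLp p (X × X)))) atTop
        (nhds (e.symm (x, y))) := by
    intro c x y hx hy
    have hpair : Tendsto (fun N => ((∑ n ∈ Finset.range N, c n • ((F.τ n : X))),
        (∑ n ∈ Finset.range N, c n • ((G.τ n : X))))) atTop (nhds (x, y)) :=
      hx.prodMk_nhds hy
    have := (e.symm.continuous.tendsto (x, y)).comp hpair
    convert this using 2 with N
    apply e.injective
    simp only [Function.comp_apply, ContinuousLinearEquiv.apply_symm_apply]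
    rw [map_sum]
    refine Prod.ext ?_ ?_
    · rw [Prod.fst_sum]
      refine Finset.sum_congr rfl fun n _ => ?_
      rw [map_smul, etp n]
      rfl
    · rw [Prod.snd_sum]
      refine Finset.sum_congr rfl fun n _ => ?_
      rw [map_smul, etp n]
      rfl
  -- analysis functions
  set ff : ℕ → M' → 𝕂 := fun n z => F.f n (π₁ z) + G.f n (π₂ z) with hff
  refine ⟨{
    f := ff
    τ := tp
    f_lip := fun n => by
      obtain ⟨K1, h1⟩ := F.f_lip n
      obtain ⟨K2, h2⟩ := G.f_lip n
      exact ⟨K1 * 1 + K2 * 1, ((h1.comp lipπ₁).add (h2.comp lipπ₂))⟩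
    θf := fun z => F.θf (π₁ z) + G.θf (π₂ z)
    θf_apply := fun z n => by
      have : (F.θf (π₁ z) + G.θf (π₂ z)) n = F.θf (π₁ z) n + G.θf (π₂ z) n := rfl
      rw [this, F.θf_apply, G.θf_apply]
    θf_lip := by
      obtain ⟨K1, h1⟩ := F.θf_lip
      obtain ⟨K2, h2⟩ := G.θf_lip
      exact ⟨K1 * 1 + K2 * 1, ((h1.comp lipπ₁).add (h2.comp lipπ₂))⟩
    θτ := e.symm.toContinuousLinearMap.comp (F.θτ.prod G.θτ)
    θτ_sum := fun a => key a (F.θτ a) (G.θτ a) (F.θτ_sum a) (G.θτ_sum a)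
    S := id
    S_sum := fun z => by
      have hx1 : Tendsto (fun N => ∑ n ∈ Finset.range N, F.f n (π₁ z) • ((F.τ n : X)))
          atTop (nhds ((π₁ z : X))) := by
        have := F.S_sum (π₁ z); rwa [hFS] at this
      have hy2 : Tendsto (fun N => ∑ n ∈ Finset.range N, G.f n (π₂ z) • ((G.τ n : X)))
          atTop (nhds ((π₂ z : X))) := by
        have := G.S_sum (π₂ z); rwa [hGS] at this
      have k1 := key (fun n => F.f n (π₁ z)) (π₁ z : X) 0 hx1 (horth₂ (π₁ z))
      have k2 := key (fun n => G.f n (π₂ z)) 0 (π₂ z : X) (horth₁ (π₂ z)) hy2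
      have hadd := k1.add k2
      have hsum : (fun N => (∑ n ∈ Finset.range N,
            F.f n (π₁ z) • ((tp n : WithLp p (X × X)))) +
            ∑ n ∈ Finset.range N, G.f n (π₂ z) • ((tp n : WithLp p (X × X))))
          = fun N => ∑ n ∈ Finset.range N, ff n z • ((tp n : WithLp p (X × X))) := by
        funext N
        rw [← Finset.sum_add_distrib]
        exact Finset.sum_congr rfl fun n _ => (add_smul _ _ _).symm
      rw [hsum] at hadd
      have hlim : e.symm ((π₁ z : X), (0 : X)) + e.symm ((0 : X), (π₂ z : X))
          = ((id z : M') : WithLp p (X × X)) := by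
        rw [← map_add]
        have : ((π₁ z : X), (0 : X)) + ((0 : X), (π₂ z : X))
            = ((π₁ z : X), (π₂ z : X)) := by simp
        rw [this]
        apply e.injective
        rw [e.apply_symm_apply]
        rfl
      rwa [hlim] at hadd
    Sinv := id
    left_inv := fun _ => rfl
    right_inv := fun _ => rfl
    S_lip := ⟨1, LipschitzWith.id⟩
    Sinv_lip := ⟨1, LipschitzWith.id⟩
    recon := fun z => by
      have hx1 : Tendsto (fun N => ∑ n ∈ Finset.range N, F.f n (π₁ z) • ((F.τ n : X)))
          atTop (nhds ((π₁ z : X))) := by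
        have := F.S_sum (π₁ z); rwa [hFS] at this
      have hy2 : Tendsto (fun N => ∑ n ∈ Finset.range N, G.f n (π₂ z) • ((G.τ n : X)))
          atTop (nhds ((π₂ z : X))) := by
        have := G.S_sum (π₂ z); rwa [hGS] at this
      have k1 := key (fun n => F.f n (π₁ z)) (π₁ z : X) 0 hx1 (horth₂ (π₁ z))
      have k2 := key (fun n => G.f n (π₂ z)) 0 (π₂ z : X) (horth₁ (π₂ z)) hy2
      have hadd := k1.add k2
      have hsum : (fun N => (∑ n ∈ Finset.range N,
            F.f n (π₁ z) • ((tp n : WithLp p (X × X)))) +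
            ∑ n ∈ Finset.range N, G.f n (π₂ z) • ((tp n : WithLp p (X × X))))
          = fun N => ∑ n ∈ Finset.range N, ff n z • ((tp n : WithLp p (X × X))) := by
        funext N
        rw [← Finset.sum_add_distrib]
        exact Finset.sum_congr rfl fun n _ => (add_smul _ _ _).symm
      rw [hsum] at hadd
      have hlim : e.symm ((π₁ z : X), (0 : X)) + e.symm ((0 : X), (π₂ z : X))
          = (z : WithLp p (X × X)) := by
        rw [← map_add]
        have : ((π₁ z : X), (0 : X)) + ((0 : X), (π₂ z : X))
            = ((π₁ z : X), (π₂ z : X)) := by simp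
        rw [this]
        apply e.injective
        rw [e.apply_symm_apply]
        rfl
      rwa [hlim] at hadd
  }, fun n z => rfl, fun n => by simp [htp], rfl⟩
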